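/- arXiv:1301.4428 — 2 statements merged into one kernel-verified Lean document; each statement's English description precedes it below -/
import Mathlib

section
/- Suppose π_n^{y_{1:n}}(x) = c_n x^{q−1} ∫ λ^q e^{−λx} dU_n(λ) for x > 0, where U_n is a probability measure supported in a compact subinterval of (0,∞) and c_n > 0 is a normalizing constant. Then π_{n+1}^{y_{1:n+1}}(x) = c_{n+1} x^{q−1} ∫ λ^q e^{−λx} dU_{n+1}(λ) for x > 0, where U_{n+1} is the normalization of the finite measure A ↦ ∫ 1_A(λ/b + y_{n+1}) (λ/b + y_{n+1})^{−q} λ^α dU_n(λ), i.e. U_{n+1} arises from U_n by multiplying the density by λ^α, pushing forward under λ ↦ λ/b + y_{n+1}, multiplying by λ^{−q}, and normalizing. -/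
open MeasureTheory Set
open scoped ENNReal NNReal


lemma integral_Ioi_shift (f : ℝ → ℝ) (a : ℝ) :
    ∫ x in Ioi a, f x = ∫ x in Ioi 0, f (x + a) := by
  rw [← integral_indicator measurableSet_Ioi, ← integral_indicator measurableSet_Ioi,
    ← integral_add_right_eq_self (fun x => (Ioi a).indicator f x) a]
  congr 1 with x
  simp only [indicator_apply, mem_Ioi, lt_add_iff_pos_left]

lemma integrableOn_rpow_exp {a r : ℝ} (ha : 0 < a) (hr : 0 < r) :
    IntegrableOn (fun w : ℝ => w ^ (a - 1) * Real.exp (-(r * w))) (Ioi 0) := by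
  have base := Real.GammaIntegral_convergent ha
  have h1 : IntegrableOn (fun x : ℝ => Real.exp (-(r * x)) * (r * x) ^ (a - 1)) (Ioi 0) := by
    have := (integrableOn_Ioi_comp_mul_left_iff
      (fun x : ℝ => Real.exp (-x) * x ^ (a - 1)) 0 hr).mpr (by simpa using base)
    simpa using this
  refine IntegrableOn.congr_fun (h1.const_mul (r ^ (1 - a))) (fun x hx => ?_) measurableSet_Ioi
  have hx0 : (0:ℝ) < x := hx
  rw [Real.mul_rpow hr.le hx0.le]
  rw [show r ^ (1-a) * (Real.exp (-(r*x)) * (r ^ (a-1) * x ^ (a-1)))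
      = (r ^ (1-a) * r ^ (a-1)) * (x ^ (a-1) * Real.exp (-(r*x))) by ring,
    ← Real.rpow_add hr]
  norm_num

lemma integrableOn_Ioi_shift {f : ℝ → ℝ} {a : ℝ}
    (h : IntegrableOn (fun x => f (x + a)) (Ioi 0)) : IntegrableOn f (Ioi a) := by
  have e : MeasurePreserving (fun x : ℝ => x + a) volume volume :=
    measurePreserving_add_right volume a
  have emb : MeasurableEmbedding (fun x : ℝ => x + a) :=
    (MeasurableEquiv.addRight a).measurableEmbedding
  have := (e.integrableOn_comp_preimage emb (f := f) (s := Ioi a)).mp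
  rw [show (fun x : ℝ => x + a) ⁻¹' Ioi a = Ioi 0 by ext x; simp] at this
  exact this h

lemma key_cong {β b t x : ℝ} (hb : 0 < b) : ∀ w ∈ Ioi (0:ℝ),
    (b*(w + x/b) - x) ^ (β-1) * Real.exp (-(t*(w + x/b)))
      = (b ^ (β-1) * Real.exp (-(t*(x/b)))) * (w ^ (β-1) * Real.exp (-(t*w))) := by
  intro w hw
  have hw0 : (0:ℝ) < w := hw
  have h1 : b*(w + x/b) - x = b * w := by field_simp; ring
  rw [h1, Real.mul_rpow hb.le hw0.le, show t*(w + x/b) = t*w + t*(x/b) by ring,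
    neg_add, Real.exp_add]
  ring

lemma key_integrable {β b t x : ℝ} (hβ : 0 < β) (hb : 0 < b) (ht : 0 < t) :
    IntegrableOn (fun s : ℝ => (b*s - x) ^ (β-1) * Real.exp (-(t*s))) (Ioi (x/b)) := by
  apply integrableOn_Ioi_shift
  exact IntegrableOn.congr_fun
    ((integrableOn_rpow_exp hβ ht).const_mul (b ^ (β-1) * Real.exp (-(t*(x/b)))))
    (fun w hw => (key_cong hb w hw).symm) measurableSet_Ioi

lemma key_integral {β b t x : ℝ} (hβ : 0 < β) (hb : 0 < b) (ht : 0 < t) :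
    ∫ s in Ioi (x/b), (b*s - x) ^ (β-1) * Real.exp (-(t*s))
      = b ^ (β-1) * (1/t) ^ β * Real.Gamma β * Real.exp (-(t*(x/b))) := by
  rw [integral_Ioi_shift, setIntegral_congr_fun measurableSet_Ioi (key_cong hb),
    integral_const_mul, Real.integral_rpow_mul_exp_neg_mul_Ioi hβ ht]
  ring

noncomputable def pKer (α β b s x : ℝ) : ℝ :=
  if 0 ≤ x ∧ x ≤ b * s then
    (b * s) ^ (1 - (α + β)) * x ^ (α - 1) * (b * s - x) ^ (β - 1) /
      (Real.Gamma α * Real.Gamma β / Real.Gamma (α + β))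
  else 0

noncomputable def gObs (β x y : ℝ) : ℝ :=
  x ^ β * y ^ (β - 1) * Real.exp (-(x * y)) / Real.Gamma β

noncomputable def nextMix (α β b y : ℝ) (U : Measure ℝ) : Measure ℝ :=
  let V1 := U.withDensity fun t => ENNReal.ofReal (t ^ α)
  let V2 := V1.map fun t => t / b + y
  let V3 := V2.withDensity fun t => ENNReal.ofReal (t ^ (-(α + β)))
  (V3 Set.univ)⁻¹ • V3


lemma nextMix_repr (α β b u o yobs : ℝ) (hα : 0 < α) (hβ : 0 < β) (hb : 0 < b)
    (hu : 0 < u) (huo : u ≤ o) (hy : 0 < yobs)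
    (U : Measure ℝ) [IsProbabilityMeasure U] (hUsupp : U (Set.Icc u o)ᶜ = 0) :
    ∃ Z : ℝ, 0 < Z ∧ ∀ x : ℝ,
      ∫ t, t ^ (α + β) * Real.exp (-(t * x)) ∂(nextMix α β b yobs U)
        = Z⁻¹ * ∫ t, t ^ α * Real.exp (-((t / b + yobs) * x)) ∂U := by
  have hae : ∀ᵐ t ∂U, t ∈ Icc u o := by
    rw [ae_iff]
    simpa [Set.compl_def] using hUsupp
  set φ : ℝ → ℝ := fun t => t / b + yobs with hφ
  have hφm : Measurable φ := by fun_prop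
  set q : ℝ := α + β with hqdef
  set Z : ℝ := ∫ t, t ^ α * φ t ^ (-q) ∂U with hZdef
  have hmeasZ : Measurable fun t : ℝ => t ^ α * φ t ^ (-q) := by fun_prop
  have hφu : ∀ t ∈ Icc u o, 0 < φ t := fun t ht => by
    have : 0 < t := lt_of_lt_of_le hu ht.1
    positivity
  have hbound : ∀ t ∈ Icc u o, t ^ α * φ t ^ (-q) ≤ o ^ α * φ u ^ (-q) := by
    intro t ht
    have ht0 : 0 < t := lt_of_lt_of_le hu ht.1
    have h1 : t ^ α ≤ o ^ α := Real.rpow_le_rpow ht0.le ht.2 hα.le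
    have h2 : φ t ^ (-q) ≤ φ u ^ (-q) := by
      have hφupos : 0 < φ u := by show (0:ℝ) < u / b + yobs; positivity
      apply Real.rpow_le_rpow_of_nonpos hφupos _ (by rw [hqdef]; linarith)
      show u / b + yobs ≤ t / b + yobs
      gcongr
      exact ht.1
    exact mul_le_mul h1 h2 (Real.rpow_nonneg (hφu t ht).le _)
      (Real.rpow_nonneg (hu.trans_le huo).le _)
  have hlbound : ∀ t ∈ Icc u o, u ^ α * φ o ^ (-q) ≤ t ^ α * φ t ^ (-q) := by
    intro t ht
    have ht0 : 0 < t := lt_of_lt_of_le hu ht.1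
    have h1 : u ^ α ≤ t ^ α := Real.rpow_le_rpow hu.le ht.1 hα.le
    have h2 : φ o ^ (-q) ≤ φ t ^ (-q) := by
      apply Real.rpow_le_rpow_of_nonpos (hφu t ht) _ (by rw [hqdef]; linarith)
      show t / b + yobs ≤ o / b + yobs
      gcongr
      exact ht.2
    exact mul_le_mul h1 h2 (Real.rpow_nonneg (show (0:ℝ) ≤ o / b + yobs by have := hu.trans_le huo; positivity) _)
      (Real.rpow_nonneg ht0.le _)
  have hZint : Integrable (fun t : ℝ => t ^ α * φ t ^ (-q)) U := by
    refine Integrable.mono' (integrable_const (o ^ α * φ u ^ (-q)))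
      hmeasZ.aestronglyMeasurable ?_
    filter_upwards [hae] with t ht
    have ht0 : 0 < t := lt_of_lt_of_le hu ht.1
    have hφt := hφu t ht
    rw [Real.norm_eq_abs, abs_of_nonneg (by positivity)]
    exact hbound t ht
  have hZpos : 0 < Z := by
    have hconst : Integrable (fun _ : ℝ => u ^ α * φ o ^ (-q)) U := integrable_const _
    have hle : (fun _ : ℝ => u ^ α * φ o ^ (-q)) ≤ᵐ[U] fun t => t ^ α * φ t ^ (-q) := by
      filter_upwards [hae] with t ht; exact hlbound t ht
    have hmono := integral_mono_ae hconst hZint hle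
    have hco : (0:ℝ) < u ^ α * φ o ^ (-q) := by
      have ho := hu.trans_le huo
      have hφo : 0 < φ o := by show (0:ℝ) < o / b + yobs; positivity
      positivity
    calc (0:ℝ) < u ^ α * φ o ^ (-q) := hco
      _ = ∫ _t, (u ^ α * φ o ^ (-q)) ∂U := by simp
      _ ≤ Z := hmono
  set V1 := U.withDensity fun t => ENNReal.ofReal (t ^ α) with hV1
  set V2 := V1.map φ with hV2
  set V3 := V2.withDensity fun t => ENNReal.ofReal (t ^ (-q)) with hV3
  have hnext : nextMix α β b yobs U = (V3 univ)⁻¹ • V3 := rfl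
  have hV3univ : V3 univ = ENNReal.ofReal Z := by
    rw [hV3, withDensity_apply _ MeasurableSet.univ, Measure.restrict_univ, hV2,
      lintegral_map (by fun_prop) hφm, hV1,
      lintegral_withDensity_eq_lintegral_mul _ (by fun_prop) (by fun_prop)]
    have hnn : 0 ≤ᵐ[U] fun t : ℝ => t ^ α * φ t ^ (-q) := by
      filter_upwards [hae] with t ht
      have ht0 : 0 < t := lt_of_lt_of_le hu ht.1
      have hp := hφu t ht
      positivity
    rw [hZdef, ofReal_integral_eq_lintegral_ofReal hZint hnn]
    apply lintegral_congr_ae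
    filter_upwards [hae] with t ht
    have ht0 : 0 < t := lt_of_lt_of_le hu ht.1
    simp only [Pi.mul_apply]
    rw [← ENNReal.ofReal_mul (Real.rpow_nonneg ht0.le α)]
  refine ⟨Z, hZpos, fun x => ?_⟩
  have hm1 : Measurable fun t : ℝ => (t ^ (-q)).toNNReal := by fun_prop
  have hm2 : Measurable fun t : ℝ => (t ^ α).toNNReal := by fun_prop
  have hg : Measurable fun t : ℝ => max (t ^ (-q)) 0 * (t ^ q * Real.exp (-(t * x))) := by
    fun_prop
  have hstep : ∫ t, t ^ q * Real.exp (-(t * x)) ∂V3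
      = ∫ t, t ^ α * Real.exp (-((t / b + yobs) * x)) ∂U := by
    rw [hV3, show (fun t : ℝ => ENNReal.ofReal (t ^ (-q)))
        = fun t => ((t ^ (-q)).toNNReal : ℝ≥0∞) from rfl,
      integral_withDensity_eq_integral_smul hm1]
    rw [show (fun t : ℝ => (t ^ (-q)).toNNReal • (t ^ q * Real.exp (-(t * x))))
        = fun t : ℝ => max (t ^ (-q)) 0 * (t ^ q * Real.exp (-(t * x))) from
      funext fun t => by rw [NNReal.smul_def, Real.coe_toNNReal', smul_eq_mul]]
    rw [hV2, integral_map hφm.aemeasurable hg.aestronglyMeasurable]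
    rw [hV1, show (fun t : ℝ => ENNReal.ofReal (t ^ α))
        = fun t => ((t ^ α).toNNReal : ℝ≥0∞) from rfl,
      integral_withDensity_eq_integral_smul hm2]
    apply integral_congr_ae
    filter_upwards [hae] with t ht
    have ht0 : 0 < t := lt_of_lt_of_le hu ht.1
    have hp : (0:ℝ) < t / b + yobs := by positivity
    rw [NNReal.smul_def, Real.coe_toNNReal', smul_eq_mul]
    show max (t ^ α) 0 * (max ((t / b + yobs) ^ (-q)) 0
        * ((t / b + yobs) ^ q * Real.exp (-((t / b + yobs) * x))))
      = t ^ α * Real.exp (-((t / b + yobs) * x))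
    rw [max_eq_left (Real.rpow_nonneg ht0.le _), max_eq_left (Real.rpow_nonneg hp.le _)]
    have e3 : (t/b+yobs) ^ (-q) * (t/b+yobs) ^ q = 1 := by
      rw [← Real.rpow_add hp]; simp
    rw [show (t/b+yobs) ^ (-q) * ((t/b+yobs) ^ q * Real.exp (-((t/b+yobs) * x)))
        = ((t/b+yobs) ^ (-q) * (t/b+yobs) ^ q) * Real.exp (-((t/b+yobs) * x)) from by ring,
      e3, one_mul]
  rw [hnext, integral_smul_measure, hV3univ, hstep, ENNReal.toReal_inv,
    ENNReal.toReal_ofReal hZpos.le, smul_eq_mul]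

/-- One step of the filter recursion maps a mixed Gamma density with mixing
measure `U_n` to a mixed Gamma density with mixing measure `U_{n+1} = nextMix`. -/
theorem filter_step_mixed_gamma
    (α β b : ℝ) (hα : 0 < α) (hβ : 0 < β) (hb : 0 < b)
    (u o : ℝ) (hu : 0 < u) (huo : u ≤ o)
    (U : Measure ℝ) [IsProbabilityMeasure U] (hUsupp : U (Set.Icc u o)ᶜ = 0)
    (yobs : ℝ) (hy : 0 < yobs)
    (πn πn1 : ℝ → ℝ) (cn cn1 : ℝ) (hcn : 0 < cn) (hcn1 : 0 < cn1)
    (hπn : ∀ x ∈ Set.Ioi (0 : ℝ),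
      πn x = cn * x ^ (α + β - 1) * ∫ t, t ^ (α + β) * Real.exp (-(t * x)) ∂U)
    (hrec : ∀ x ∈ Set.Ioi (0 : ℝ),
      πn1 x = gObs β x yobs * (∫ s in Set.Ioi (0 : ℝ), pKer α β b s x * πn s) / cn1)
    (hnorm : (∫ x in Set.Ioi (0 : ℝ), πn1 x) = 1) :
    ∃ c' : ℝ, 0 < c' ∧ ∀ x ∈ Set.Ioi (0 : ℝ),
      πn1 x = c' * x ^ (α + β - 1) *
        ∫ t, t ^ (α + β) * Real.exp (-(t * x)) ∂(nextMix α β b yobs U) := by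
  obtain ⟨Z, hZpos, hZ⟩ := nextMix_repr α β b u o yobs hα hβ hb hu huo hy U hUsupp
  have hae : ∀ᵐ t ∂U, t ∈ Icc u o := by
    rw [ae_iff]; simpa [Set.compl_def] using hUsupp
  set Bval := Real.Gamma α * Real.Gamma β / Real.Gamma (α + β) with hBval
  have hBpos : 0 < Bval := by rw [hBval]; positivity
  have hΓβ : 0 < Real.Gamma β := Real.Gamma_pos_of_pos hβ
  refine ⟨cn * b ^ (-α) * yobs ^ (β - 1) / (Bval * cn1) * Z, by positivity, fun x hx => ?_⟩
  have hx0 : (0:ℝ) < x := hx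
  set c : ℝ := x / b with hc
  have hc0 : 0 < c := by rw [hc]; positivity
  set H : ℝ → ℝ := fun s => ∫ t, t ^ (α + β) * Real.exp (-(t * s)) ∂U with hH
  set S : ℝ := ∫ t, t ^ α * Real.exp (-(t * c)) ∂U with hS
  set D : ℝ := cn * b ^ (1 - (α + β)) * x ^ (α - 1) / Bval with hD
  -- Step 1
  have hI1 : (∫ s in Ioi (0:ℝ), pKer α β b s x * πn s)
      = D * ∫ s in Ioi c, (b*s - x) ^ (β - 1) * H s := by
    have hpoint : ∀ s ∈ Ioi (0:ℝ), pKer α β b s x * πn s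
        = (Ici c).indicator (fun s => D * ((b*s - x) ^ (β - 1) * H s)) s := by
      intro s hs
      have hs0 : (0:ℝ) < s := hs
      rw [hπn s hs]
      by_cases hxb : x ≤ b * s
      · have hmem : s ∈ Ici c := by
          rw [mem_Ici, hc, div_le_iff₀ hb]; linarith
        rw [indicator_of_mem hmem, pKer, if_pos ⟨hx0.le, hxb⟩]
        have hsplit : (b*s) ^ (1 - (α+β)) = b ^ (1 - (α+β)) * s ^ (1 - (α+β)) :=
          Real.mul_rpow hb.le hs0.le
        have hss : s ^ (1 - (α+β)) * s ^ (α + β - 1) = 1 := by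
          rw [← Real.rpow_add hs0]; norm_num
        rw [hsplit, hD, ← hBval]
        rw [show (∫ t, t ^ (α + β) * Real.exp (-(t * s)) ∂U) = H s from rfl]
        field_simp
        linear_combination ((b*s-x) ^ (β-1) * H s) * hss
      · have hnmem : s ∉ Ici c := by
          intro hmem
          exact hxb (by rw [mem_Ici, hc, div_le_iff₀ hb] at hmem; linarith)
        rw [indicator_of_notMem hnmem, pKer, if_neg (fun h => hxb h.2), zero_mul]
    have hset2 : Ioi (0:ℝ) ∩ Ici c = Ici c := by
      rw [inter_eq_right]; exact fun s hs => lt_of_lt_of_le hc0 hs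
    rw [setIntegral_congr_fun measurableSet_Ioi hpoint,
      setIntegral_indicator measurableSet_Ici, hset2,
      integral_Ici_eq_integral_Ioi, integral_const_mul]
  -- Step 2 : Fubini
  have h1 : ∀ᵐ z ∂((volume.restrict (Ioi c)).prod U), z.1 ∈ Ioi c := by
    rw [ae_iff]
    have hset : {z : ℝ × ℝ | ¬ z.1 ∈ Ioi c} = (Ioi c)ᶜ ×ˢ (univ : Set ℝ) := by
      ext z; simp
    rw [hset, Measure.prod_prod, Measure.restrict_apply measurableSet_Ioi.compl,
      compl_inter_self, measure_empty, zero_mul]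
  have h2 : ∀ᵐ z ∂((volume.restrict (Ioi c)).prod U), z.2 ∈ Icc u o := by
    rw [ae_iff]
    have hset : {z : ℝ × ℝ | ¬ z.2 ∈ Icc u o} = (univ : Set ℝ) ×ˢ (Icc u o)ᶜ := by
      ext z; simp
    rw [hset, Measure.prod_prod, hUsupp, mul_zero]
  have hFint : Integrable (Function.uncurry fun s t =>
      (b*s - x) ^ (β-1) * (t ^ (α+β) * Real.exp (-(t*s))))
      ((volume.restrict (Ioi c)).prod U) := by
    have hdom : Integrable (fun z : ℝ × ℝ =>
        ((b*z.1 - x) ^ (β-1) * Real.exp (-(u*z.1))) * (o ^ (α+β)))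
        ((volume.restrict (Ioi c)).prod U) := by
      rw [hc]
      exact (key_integrable hβ hb hu).mul_prod (integrable_const _)
    have hmeas : Measurable fun z : ℝ × ℝ =>
        (b*z.1 - x) ^ (β-1) * (z.2 ^ (α+β) * Real.exp (-(z.2*z.1))) := by fun_prop
    refine hdom.mono' hmeas.aestronglyMeasurable ?_
    filter_upwards [h1, h2] with z hz1 hz2
    have ho : (0:ℝ) < o := hu.trans_le huo
    have hz10 : c < z.1 := hz1
    have hz1pos : 0 < z.1 := lt_trans hc0 hz10
    have hbase : 0 ≤ b * z.1 - x := by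
      rw [hc, div_lt_iff₀ hb] at hz10; linarith
    have ht0 : 0 < z.2 := lt_of_lt_of_le hu hz2.1
    simp only [Function.uncurry]
    rw [Real.norm_eq_abs, abs_of_nonneg (mul_nonneg (Real.rpow_nonneg hbase _)
      (mul_nonneg (Real.rpow_nonneg ht0.le _) (Real.exp_pos _).le))]
    have e1 : z.2 ^ (α+β) ≤ o ^ (α+β) := Real.rpow_le_rpow ht0.le hz2.2 (by positivity)
    have e2 : Real.exp (-(z.2 * z.1)) ≤ Real.exp (-(u * z.1)) := by
      apply Real.exp_le_exp.mpr; nlinarith [hz2.1]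
    calc (b*z.1 - x) ^ (β-1) * (z.2 ^ (α+β) * Real.exp (-(z.2*z.1)))
        ≤ (b*z.1 - x) ^ (β-1) * (o ^ (α+β) * Real.exp (-(u*z.1))) := by
          apply mul_le_mul_of_nonneg_left _ (Real.rpow_nonneg hbase _)
          exact mul_le_mul e1 e2 (Real.exp_pos _).le (Real.rpow_nonneg ho.le _)
      _ = ((b*z.1 - x) ^ (β-1) * Real.exp (-(u*z.1))) * (o ^ (α+β)) := by ring
  have hswap : (∫ s in Ioi c, (b*s - x) ^ (β-1) * H s)
      = ∫ t, (∫ s in Ioi c, (b*s - x) ^ (β-1) * (t ^ (α+β) * Real.exp (-(t*s)))) ∂U := by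
    rw [show (fun s => (b*s - x) ^ (β-1) * H s)
        = fun s => ∫ t, (b*s - x) ^ (β-1) * (t ^ (α+β) * Real.exp (-(t*s))) ∂U from
      funext fun s => by rw [hH, ← integral_const_mul]]
    exact integral_integral_swap hFint
  -- Step 3 : inner integral
  have hinner : (∫ t, (∫ s in Ioi c, (b*s-x) ^ (β-1) * (t ^ (α+β) * Real.exp (-(t*s)))) ∂U)
      = (b ^ (β-1) * Real.Gamma β) * S := by
    rw [hS, ← integral_const_mul]
    apply integral_congr_ae
    filter_upwards [hae] with t ht
    have ht0 : 0 < t := lt_of_lt_of_le hu ht.1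
    rw [show (fun s => (b*s-x) ^ (β-1) * (t ^ (α+β) * Real.exp (-(t*s))))
        = fun s => t ^ (α+β) * ((b*s-x) ^ (β-1) * Real.exp (-(t*s))) from
      funext fun s => by ring]
    rw [integral_const_mul, hc, key_integral hβ hb ht0]
    have h1t : (1/t : ℝ) ^ β = t ^ (-β) := by
      rw [one_div, Real.inv_rpow ht0.le, ← Real.rpow_neg ht0.le]
    have h2t : t ^ (α+β) * t ^ (-β) = t ^ α := by
      rw [← Real.rpow_add ht0]; congr 1; ring
    rw [h1t]
    linear_combination (b ^ (β-1) * Real.Gamma β * Real.exp (-(t*(x/b)))) * h2t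
  -- Step 4 : assemble
  have hE : (∫ t, t ^ α * Real.exp (-((t/b + yobs) * x)) ∂U) = Real.exp (-(x*yobs)) * S := by
    rw [hS, ← integral_const_mul]
    apply integral_congr_ae
    apply ae_of_all
    intro t
    have harg : -((t/b+yobs)*x) = -(x*yobs) + -(t*c) := by
      rw [hc]; field_simp; ring
    show t ^ α * Real.exp (-((t/b + yobs) * x))
      = Real.exp (-(x*yobs)) * (t ^ α * Real.exp (-(t * c)))
    rw [harg, Real.exp_add]
    ring
  rw [hrec x hx, hI1, hswap, hinner, hZ x, hE, gObs, hD]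
  have hxx : x ^ β * x ^ (α-1) = x ^ (α+β-1) := by
    rw [← Real.rpow_add hx0]; congr 1; ring
  have hbb : b ^ (1-(α+β)) * b ^ (β-1) = b ^ (-α) := by
    rw [← Real.rpow_add hb]; congr 1; ring
  have hZZ : Z * Z⁻¹ = 1 := mul_inv_cancel₀ hZpos.ne'
  field_simp
  linear_combination (b ^ (1-(α+β)) * b ^ (β-1) * S) * hxx
    + (S * x ^ (α+β-1)) * hbb
end

section
/- Assume E(X_0^β) < ∞. Then for every δ with 0 ≤ δ < E(W_1^β)^{−1/β}, almost surely b^j Y_j > δ^j for all sufficiently large j; that is, P(liminf_{j→∞} {b^j Y_j > δ^j}) = 1. -/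
open MeasureTheory Set

noncomputable def betaMeas (a c : ℝ) : Measure ℝ :=
  (volume : Measure ℝ).withDensity fun x =>
    ENNReal.ofReal
      (if 0 < x ∧ x < 1 then
        Real.Gamma (a + c) / (Real.Gamma a * Real.Gamma c) * x ^ (a - 1) * (1 - x) ^ (c - 1)
      else 0)

noncomputable def gammaMeas (lam r : ℝ) : Measure ℝ :=
  (volume : Measure ℝ).withDensity fun x =>
    ENNReal.ofReal
      (if 0 < x then lam ^ r * x ^ (r - 1) * Real.exp (-(lam * x)) / Real.Gamma r else 0)

lemma gammaMeas_Iic_le {β : ℝ} (hβ : 0 < β) {t : ℝ} (ht : 0 ≤ t) :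
    gammaMeas 1 β (Set.Iic t) ≤ ENNReal.ofReal (t ^ β / Real.Gamma (β + 1)) := by
  have hΓ : 0 < Real.Gamma β := Real.Gamma_pos_of_pos hβ
  rw [gammaMeas, withDensity_apply _ measurableSet_Iic]
  have hsplit : Set.Iic t = Set.Iic 0 ∪ Set.Ioc 0 t := (Set.Iic_union_Ioc_eq_Iic ht).symm
  rw [hsplit, lintegral_union measurableSet_Ioc (Set.Iic_disjoint_Ioc le_rfl)]
  have h1 : (∫⁻ x in Set.Iic 0, ENNReal.ofReal
      (if 0 < x then (1:ℝ) ^ β * x ^ (β - 1) * Real.exp (-(1 * x)) / Real.Gamma β else 0)) = 0 := by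
    rw [setLIntegral_congr_fun_ae measurableSet_Iic
      (ae_of_all _ (fun x (hx : x ≤ 0) => by rw [if_neg (not_lt.2 hx), ENNReal.ofReal_zero]))]
    simp
  rw [h1, zero_add]
  have hint : IntegrableOn (fun x : ℝ => x ^ (β - 1)) (Set.Ioc 0 t) := by
    have := intervalIntegral.intervalIntegrable_rpow' (a := 0) (b := t)
      (show (-1:ℝ) < β - 1 by linarith)
    rwa [intervalIntegrable_iff_integrableOn_Ioc_of_le ht] at this
  have hint2 : IntegrableOn (fun x : ℝ => x ^ (β - 1) / Real.Gamma β) (Set.Ioc 0 t) :=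
    hint.div_const _
  have hval : (∫ x in Set.Ioc 0 t, x ^ (β - 1) / Real.Gamma β) = t ^ β / Real.Gamma (β + 1) := by
    rw [integral_div, ← intervalIntegral.integral_of_le ht,
      integral_rpow (Or.inl (by linarith : (-1:ℝ) < β - 1))]
    rw [sub_add_cancel, Real.zero_rpow hβ.ne', sub_zero, Real.Gamma_add_one hβ.ne', div_div,
      mul_comm]
  calc (∫⁻ x in Set.Ioc 0 t, ENNReal.ofReal
      (if 0 < x then (1:ℝ) ^ β * x ^ (β - 1) * Real.exp (-(1 * x)) / Real.Gamma β else 0))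
      ≤ ∫⁻ x in Set.Ioc 0 t, ENNReal.ofReal (x ^ (β - 1) / Real.Gamma β) := by
        refine setLIntegral_mono' measurableSet_Ioc fun x hx => ENNReal.ofReal_le_ofReal ?_
        rw [if_pos hx.1, Real.one_rpow, one_mul, one_mul]
        have hexp : Real.exp (-x) ≤ 1 := Real.exp_le_one_iff.2 (by linarith [hx.1])
        have hxp : (0:ℝ) ≤ x ^ (β - 1) := Real.rpow_nonneg hx.1.le _
        gcongr
        nlinarith [Real.exp_pos (-x)]
    _ = ENNReal.ofReal (t ^ β / Real.Gamma (β + 1)) := by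
        rw [← ofReal_integral_eq_lintegral_ofReal hint2
          ((ae_restrict_iff' measurableSet_Ioc).2 (ae_of_all _ fun x hx =>
            div_nonneg (Real.rpow_nonneg hx.1.le _) hΓ.le)), hval]

lemma betaMeas_compl_Ioo (a c : ℝ) : betaMeas a c ((Set.Ioo (0:ℝ) 1)ᶜ) = 0 := by
  rw [betaMeas, withDensity_apply _ measurableSet_Ioo.compl]
  rw [setLIntegral_congr_fun_ae measurableSet_Ioo.compl
    (ae_of_all _ (fun x hx => by
      rw [if_neg (by simpa [Set.mem_Ioo] using hx), ENNReal.ofReal_zero]))]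
  simp

/-- Lemma 2: if `E(X₀^β) < ∞` and `0 ≤ δ < E(W₁^β)^{-1/β}` then almost surely
`b^j Y_j > δ^j` for all sufficiently large `j`. -/
theorem eventually_obs_large
    {Ω : Type*} [MeasurableSpace Ω] (P : Measure Ω) [IsProbabilityMeasure P]
    (α β b : ℝ) (hα : 0 < α) (hβ : 0 < β) (hb : 0 < b)
    (W G : ℕ → Ω → ℝ) (X0 : Ω → ℝ) (X Y : ℕ → Ω → ℝ)
    (hWm : ∀ n, Measurable (W n)) (hGm : ∀ n, Measurable (G n)) (hX0m : Measurable X0)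
    (hW : ∀ n, Measure.map (W n) P = betaMeas α β)
    (hG : ∀ n, Measure.map (G n) P = gammaMeas 1 β)
    (hindep : ProbabilityTheory.iIndepFun
      (Sum.elim W (Sum.elim G fun _ : Unit => X0)) P)
    (hX0pos : ∀ ω, 0 < X0 ω)
    (hX0 : X 0 = X0) (hXrec : ∀ n ω, X (n + 1) ω = b * X n ω * W n ω)
    (hY : ∀ n ω, Y (n + 1) ω = G n ω / X (n + 1) ω)
    (hX0int : Integrable (fun ω => X0 ω ^ β) P)
    (δ : ℝ) (hδ0 : 0 ≤ δ) (hδ : δ < (∫ ω, W 0 ω ^ β ∂P) ^ (-β⁻¹)) :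
    ∀ᵐ ω ∂P, ∃ N : ℕ, ∀ j, N ≤ j → δ ^ j < b ^ j * Y j ω := by
  classical
  set f : ℕ ⊕ (ℕ ⊕ Unit) → Ω → ℝ := Sum.elim W (Sum.elim G fun _ : Unit => X0) with hf
  have hfm : ∀ i, Measurable (f i) := by
    rintro (n | n | _)
    · exact hWm n
    · exact hGm n
    · exact hX0m
  set Z : ℕ → Ω → ℝ := fun n ω => X0 ω * ∏ k ∈ Finset.range n, W k ω with hZ
  have hZm : ∀ n, Measurable (Z n) :=
    fun n => hX0m.mul (Finset.measurable_prod _ fun k _ => hWm k)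
  -- Z n as a product over an index Finset
  have hZprod : ∀ n, Z n = ∏ i ∈ insert (Sum.inr (Sum.inr ()))
      ((Finset.range n).image Sum.inl), f i := by
    intro n
    funext ω
    rw [Finset.prod_apply, Finset.prod_insert (by simp),
      Finset.prod_image (fun x _ y _ h => Sum.inl.inj h)]
    rfl
  have hIndepZW : ∀ n, ProbabilityTheory.IndepFun (Z n) (W n) P := by
    intro n
    have hnot : (Sum.inl n : ℕ ⊕ (ℕ ⊕ Unit)) ∉ insert (Sum.inr (Sum.inr ()))
        ((Finset.range n).image Sum.inl) := by
      simp
    have := hindep.indepFun_finsetProd_of_notMem hfm hnot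
    rwa [← hZprod n] at this
  have hIndepZG : ∀ n, ProbabilityTheory.IndepFun (Z (n + 1)) (G n) P := by
    intro n
    have hnot : (Sum.inr (Sum.inl n) : ℕ ⊕ (ℕ ⊕ Unit)) ∉ insert (Sum.inr (Sum.inr ()))
        ((Finset.range (n + 1)).image Sum.inl) := by
      simp
    have := hindep.indepFun_finsetProd_of_notMem hfm hnot
    rwa [← hZprod (n + 1)] at this
  -- a.e. facts about W
  have hWae : ∀ᵐ ω ∂P, ∀ n, 0 < W n ω ∧ W n ω < 1 := by
    rw [ae_all_iff]
    intro n
    rw [ae_iff]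
    have hpre : {ω | ¬(0 < W n ω ∧ W n ω < 1)} = W n ⁻¹' (Set.Ioo 0 1)ᶜ := by
      ext ω; simp [Set.mem_Ioo]
    rw [hpre, ← Measure.map_apply (hWm n) measurableSet_Ioo.compl, hW n, betaMeas_compl_Ioo]
  set m : ℝ := ∫ ω, W 0 ω ^ β ∂P with hm
  set MX : ℝ := ∫ ω, X0 ω ^ β ∂P with hMX
  have hm0 : 0 ≤ m := integral_nonneg_of_ae (by
    filter_upwards [hWae] with ω h using Real.rpow_nonneg (h 0).1.le β)
  have hmpos : 0 < m := by
    rcases hm0.lt_or_eq with h | h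
    · exact h
    · exfalso
      rw [← h, Real.zero_rpow (by simp [hβ.ne'] : -β⁻¹ ≠ 0)] at hδ
      linarith
  have hδβm : δ ^ β * m < 1 := by
    have h1 : δ ^ β < (m ^ (-β⁻¹)) ^ β := Real.rpow_lt_rpow hδ0 hδ hβ
    rw [← Real.rpow_mul hm0, neg_mul, inv_mul_cancel₀ hβ.ne', Real.rpow_neg_one] at h1
    calc δ ^ β * m < m⁻¹ * m := by
          exact mul_lt_mul_of_pos_right h1 hmpos
      _ = 1 := inv_mul_cancel₀ hmpos.ne'
  have hrpm : Measurable fun x : ℝ => x ^ β := (Real.continuous_rpow_const hβ.le).measurable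
  have hgmeas : Measurable fun x : ℝ => ENNReal.ofReal (x ^ β) :=
    ENNReal.measurable_ofReal.comp hrpm
  have hWint : Integrable (fun ω => W 0 ω ^ β) P := by
    refine Integrable.mono' (integrable_const (1:ℝ))
      (hrpm.comp (hWm 0)).aestronglyMeasurable ?_
    filter_upwards [hWae] with ω h
    rw [Real.norm_eq_abs, abs_of_nonneg (Real.rpow_nonneg (h 0).1.le β)]
    exact Real.rpow_le_one (h 0).1.le (h 0).2.le hβ.le
  have hlW : ∀ n, ∫⁻ ω, ENNReal.ofReal (W n ω ^ β) ∂P = ENNReal.ofReal m := by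
    have h1 : ∀ k, ∫⁻ ω, ENNReal.ofReal (W k ω ^ β) ∂P
        = ∫⁻ x, ENNReal.ofReal (x ^ β) ∂(betaMeas α β) := by
      intro k
      rw [← hW k, lintegral_map hgmeas (hWm k)]
    intro n
    rw [h1 n, ← h1 0, ← ofReal_integral_eq_lintegral_ofReal hWint
      (by filter_upwards [hWae] with ω h using Real.rpow_nonneg (h 0).1.le β)]
  have hZpos : ∀ᵐ ω ∂P, ∀ n, 0 < Z n ω := by
    filter_upwards [hWae] with ω h n
    exact mul_pos (hX0pos ω) (Finset.prod_pos fun k _ => (h k).1)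
  have hF : ∀ n, ∫⁻ ω, ENNReal.ofReal (Z n ω ^ β) ∂P
      = ENNReal.ofReal MX * (ENNReal.ofReal m) ^ n := by
    intro n
    induction n with
    | zero =>
      simp only [pow_zero, mul_one]
      have h0 : ∀ ω, Z 0 ω = X0 ω := fun ω => by simp [hZ]
      rw [lintegral_congr fun ω => by rw [h0 ω],
        ← ofReal_integral_eq_lintegral_ofReal hX0int
          (ae_of_all _ fun ω => Real.rpow_nonneg (hX0pos ω).le β)]
    | succ n ih =>
      have hae : (fun ω => ENNReal.ofReal (Z (n+1) ω ^ β))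
          =ᵐ[P] fun ω => ENNReal.ofReal (Z n ω ^ β) * ENNReal.ofReal (W n ω ^ β) := by
        filter_upwards [hWae] with ω h
        have hZn : (0:ℝ) ≤ Z n ω :=
          (mul_pos (hX0pos ω) (Finset.prod_pos fun k _ => (h k).1)).le
        have hsucc : Z (n+1) ω = Z n ω * W n ω := by
          simp only [hZ]; rw [Finset.prod_range_succ, mul_assoc]
        rw [hsucc, Real.mul_rpow hZn (h n).1.le, ENNReal.ofReal_mul (Real.rpow_nonneg hZn β)]
      rw [lintegral_congr_ae hae,
        show (∫⁻ a, ENNReal.ofReal (Z n a ^ β) * ENNReal.ofReal (W n a ^ β) ∂P)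
            = (∫⁻ a, ENNReal.ofReal (Z n a ^ β) ∂P) * ∫⁻ a, ENNReal.ofReal (W n a ^ β) ∂P from
          ProbabilityTheory.lintegral_mul_eq_lintegral_mul_lintegral_of_indepFun''
            (hgmeas.comp (hZm n)).aemeasurable (hgmeas.comp (hWm n)).aemeasurable
            ((hIndepZW n).comp hgmeas hgmeas),
        ih, hlW n, pow_succ, mul_assoc]
  set E : ℕ → Set Ω := fun n => {ω | G n ω ≤ δ ^ (n+1) * Z (n+1) ω} with hE
  have hΓ1 : 0 < Real.Gamma (β + 1) := Real.Gamma_pos_of_pos (by linarith)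
  set C : ENNReal := ENNReal.ofReal (Real.Gamma (β + 1)) with hC
  have hCne0 : C ≠ 0 := by
    simp only [hC, Ne, ENNReal.ofReal_eq_zero, not_le]
    exact hΓ1
  set r : ENNReal := ENNReal.ofReal (δ ^ β * m) with hr
  have hr1 : r < 1 := ENNReal.ofReal_lt_one.2 hδβm
  haveI hsf : SFinite (gammaMeas 1 β) := by unfold gammaMeas; infer_instance
  have hEbound : ∀ n, P (E n) ≤ ENNReal.ofReal MX / C * r ^ (n + 1) := by
    intro n
    set c : ℝ := δ ^ (n + 1) with hc
    have hc0 : 0 ≤ c := pow_nonneg hδ0 _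
    have hpairm : Measurable fun ω => (Z (n+1) ω, G n ω) := (hZm _).prodMk (hGm n)
    have hs : MeasurableSet {p : ℝ × ℝ | p.2 ≤ c * p.1} :=
      measurableSet_le measurable_snd (measurable_const.mul measurable_fst)
    have hmap : P.map (fun ω => (Z (n+1) ω, G n ω))
        = (P.map (Z (n+1))).prod (gammaMeas 1 β) := by
      rw [← hG n]
      exact (ProbabilityTheory.indepFun_iff_map_prod_eq_prod_map_map (hZm _).aemeasurable
        (hGm n).aemeasurable).1 (hIndepZG n)
    have hνae : ∀ᵐ z ∂(P.map (Z (n+1))), 0 < z := by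
      rw [ae_map_iff (hZm _).aemeasurable measurableSet_Ioi]
      filter_upwards [hZpos] with ω h using h (n+1)
    have hPE : P (E n) = ∫⁻ z, gammaMeas 1 β (Set.Iic (c * z)) ∂(P.map (Z (n+1))) := by
      have hEeq : E n = (fun ω => (Z (n+1) ω, G n ω)) ⁻¹' {p : ℝ × ℝ | p.2 ≤ c * p.1} := rfl
      rw [hEeq, ← Measure.map_apply hpairm hs, hmap, Measure.prod_apply hs]
      rfl
    calc P (E n) = ∫⁻ z, gammaMeas 1 β (Set.Iic (c * z)) ∂(P.map (Z (n+1))) := hPE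
      _ ≤ ∫⁻ z, ENNReal.ofReal ((c * z) ^ β / Real.Gamma (β + 1)) ∂(P.map (Z (n+1))) :=
          lintegral_mono_ae (hνae.mono fun z hz => gammaMeas_Iic_le hβ (mul_nonneg hc0 hz.le))
      _ = ∫⁻ z, ENNReal.ofReal (c ^ β) * ENNReal.ofReal (z ^ β) * C⁻¹ ∂(P.map (Z (n+1))) := by
          refine lintegral_congr_ae (hνae.mono fun z hz => ?_)
          show ENNReal.ofReal ((c * z) ^ β / Real.Gamma (β + 1))
            = ENNReal.ofReal (c ^ β) * ENNReal.ofReal (z ^ β) * C⁻¹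
          rw [Real.mul_rpow hc0 hz.le, ENNReal.ofReal_div_of_pos hΓ1,
            ENNReal.ofReal_mul (Real.rpow_nonneg hc0 β), div_eq_mul_inv]
      _ = ENNReal.ofReal (c ^ β) * (∫⁻ z, ENNReal.ofReal (z ^ β) ∂(P.map (Z (n+1)))) * C⁻¹ := by
          rw [lintegral_mul_const' _ _ (by
              rw [Ne, ENNReal.inv_eq_top]; exact hCne0),
            lintegral_const_mul _ hgmeas]
      _ = ENNReal.ofReal (c ^ β) * (ENNReal.ofReal MX * (ENNReal.ofReal m) ^ (n+1)) * C⁻¹ := by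
          rw [lintegral_map hgmeas (hZm _), hF (n+1)]
      _ = ENNReal.ofReal MX / C * r ^ (n + 1) := by
          have hcβ : c ^ β = (δ ^ β) ^ (n + 1) := by
            rw [hc, ← Real.rpow_natCast δ (n+1), ← Real.rpow_natCast (δ ^ β) (n+1),
              ← Real.rpow_mul hδ0, ← Real.rpow_mul hδ0, mul_comm]
          rw [hcβ, hr, ENNReal.ofReal_mul (Real.rpow_nonneg hδ0 β),
            ENNReal.ofReal_pow (Real.rpow_nonneg hδ0 β), mul_pow, div_eq_mul_inv]
          ring
  have hsum : (∑' n, P (E n)) ≠ ⊤ := by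
    have hle : (∑' n, P (E n)) ≤ ENNReal.ofReal MX / C * r * ∑' n, r ^ n := by
      rw [← ENNReal.tsum_mul_left]
      refine ENNReal.tsum_le_tsum fun n => (hEbound n).trans_eq ?_
      rw [pow_succ]
      ring
    refine ne_top_of_le_ne_top ?_ hle
    rw [ENNReal.tsum_geometric]
    refine ENNReal.mul_ne_top (ENNReal.mul_ne_top ?_ ENNReal.ofReal_ne_top) ?_
    · rw [div_eq_mul_inv]
      exact ENNReal.mul_ne_top ENNReal.ofReal_ne_top (by rw [Ne, ENNReal.inv_eq_top]; exact hCne0)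
    · rw [Ne, ENNReal.inv_eq_top]
      exact (tsub_pos_of_lt hr1).ne'
  have hBC := MeasureTheory.ae_eventually_notMem hsum
  have hXf : ∀ n ω, X n ω = b ^ n * Z n ω := by
    intro n
    induction n with
    | zero => intro ω; simp [hX0, hZ]
    | succ n ih =>
      intro ω
      rw [hXrec n ω, ih ω]
      simp only [hZ]
      rw [Finset.prod_range_succ, pow_succ]
      ring
  filter_upwards [hBC, hWae] with ω hev hWω
  obtain ⟨N, hN⟩ := Filter.eventually_atTop.1 hev
  refine ⟨N + 1, fun j hj => ?_⟩
  obtain ⟨n, rfl⟩ : ∃ n, j = n + 1 := ⟨j - 1, by omega⟩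
  have hn : N ≤ n := by omega
  have hZp : 0 < Z (n+1) ω := mul_pos (hX0pos ω) (Finset.prod_pos fun k _ => (hWω k).1)
  have hlt : δ ^ (n+1) * Z (n+1) ω < G n ω := not_le.1 (hN n hn)
  have hbY : b ^ (n+1) * Y (n+1) ω = G n ω / Z (n+1) ω := by
    rw [hY n ω, hXf (n+1) ω]
    field_simp
  rw [hbY]
  exact (lt_div_iff₀ hZp).2 (by linarith)
end
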